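/- Let α ∈ (π/4, π] and β ∈ [0, 3π/4) with cos α · cos β − sin(α − β) < 0, let σ ∈ ℝ with σ ≠ 0, and let u : [0,1] → ℝ be twice continuously differentiable, not identically zero, with u''(x) = σ²·u(x) for all x ∈ [0,1] and u satisfying BC(α,β). Then a contradiction follows (no such u exists). -/

import Mathlib

open Real
open Real

/-- Uniqueness for the scalar linear ODE `y' = k y + r x` on `[0,1]`. -/
lemma lin_ODE_unique (k : ℝ) (r : ℝ → ℝ) (f g : ℝ → ℝ)
    (hf : ∀ x ∈ Set.Icc (0:ℝ) 1, HasDerivAt f (k * f x + r x) x)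
    (hg : ∀ x ∈ Set.Icc (0:ℝ) 1, HasDerivAt g (k * g x + r x) x)
    (h0 : f 0 = g 0) : Set.EqOn f g (Set.Icc 0 1) := by
  have hlip : ∀ s : ℝ, LipschitzWith ‖k‖₊ (fun y : ℝ => k * y + r s) := by
    intro s
    apply LipschitzWith.of_dist_le_mul
    intro y z
    rw [Real.dist_eq, Real.dist_eq, coe_nnnorm, Real.norm_eq_abs]
    have h : k * y + r s - (k * z + r s) = k * (y - z) := by ring
    rw [h, abs_mul]
  exact ODE_solution_unique (v := fun s y => k * y + r s) hlip
    (fun x hx => (hf x hx).continuousAt.continuousWithinAt)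
    (fun s hs => (hf s (Set.Ico_subset_Icc_self hs)).hasDerivWithinAt)
    (fun x hx => (hg x hx).continuousAt.continuousWithinAt)
    (fun s hs => (hg s (Set.Ico_subset_Icc_self hs)).hasDerivWithinAt)
    h0

/-- `sinh t ≤ t * cosh t` for `t ≥ 0`, in exponential form. -/
lemma sinh_le_mul_cosh (t : ℝ) (ht : 0 ≤ t) :
    Real.exp t - Real.exp (-t) ≤ t * (Real.exp t + Real.exp (-t)) := by
  have hd : ∀ x : ℝ, HasDerivAt (fun x => x * Real.cosh x - Real.sinh x) (x * Real.sinh x) x := by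
    intro x
    have := ((hasDerivAt_id x).mul (Real.hasDerivAt_cosh x)).sub (Real.hasDerivAt_sinh x)
    exact this.congr_deriv (by simp [id])
  have hmono : Monotone (fun x : ℝ => x * Real.cosh x - Real.sinh x) := by
    apply monotone_of_deriv_nonneg
    · exact fun x => (hd x).differentiableAt
    · intro x
      rw [(hd x).deriv]
      rcases le_or_gt 0 x with h | h
      · exact mul_nonneg h (Real.sinh_nonneg_iff.mpr h)
      · nlinarith [Real.sinh_nonpos_iff.mpr h.le]
  have h2 := hmono ht
  simp only [Real.sinh_eq, Real.cosh_eq, Real.sinh_zero, Real.cosh_zero, mul_zero, zero_mul,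
    zero_sub, sub_zero] at h2
  nlinarith [h2]

/-- Under the hypotheses of the theorem, `sin (α - β)` is nonnegative. -/
lemma sin_sub_nonneg_of_cond (α β : ℝ)
    (hα : α ∈ Set.Ioc (Real.pi / 4) Real.pi)
    (hβ : β ∈ Set.Ico (0:ℝ) (3 * Real.pi / 4))
    (hcond : Real.cos α * Real.cos β - Real.sin (α - β) < 0) :
    0 ≤ Real.sin (α - β) := by
  by_contra h
  push_neg at h
  have hpi := Real.pi_pos
  have hsα : 0 ≤ Real.sin α := Real.sin_nonneg_of_nonneg_of_le_pi (by linarith [hα.1]) hα.2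
  have hsβ : 0 ≤ Real.sin β := Real.sin_nonneg_of_nonneg_of_le_pi hβ.1 (by linarith [hβ.2])
  rw [Real.sin_sub] at h hcond
  rcases le_or_gt (Real.cos α) 0 with hcα | hcα
  · rcases le_or_gt (Real.cos β) 0 with hcβ | hcβ
    · nlinarith [mul_nonneg (neg_nonneg.mpr hcα) (neg_nonneg.mpr hcβ)]
    · nlinarith [mul_nonneg hsα hcβ.le, mul_nonneg (neg_nonneg.mpr hcα) hsβ]
  · have hα2 : α < Real.pi / 2 := by
      by_contra h2
      push_neg at h2
      exact absurd (Real.cos_nonpos_of_pi_div_two_le_of_le h2 (by linarith [hα.2])) (by linarith)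
    have h1 : Real.cos α < Real.sqrt 2 / 2 := by
      have := Real.cos_lt_cos_of_nonneg_of_le_pi (by positivity) hα.2 hα.1
      rwa [Real.cos_pi_div_four] at this
    have h2 : Real.sqrt 2 / 2 < Real.sin α := by
      have := Real.strictMonoOn_sin (a := Real.pi/4) (b := α)
        ⟨by linarith, by linarith⟩ ⟨by linarith [hα.1], hα2.le⟩ hα.1
      rwa [Real.sin_pi_div_four] at this
    rcases le_or_gt 0 (Real.cos β) with hcβ | hcβ
    · nlinarith [mul_nonneg hcα.le hcβ]
    · nlinarith [mul_pos (by linarith : (0:ℝ) < -Real.cos β)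
        (by linarith : 0 < Real.sin α - Real.cos α), mul_nonneg hcα.le hsβ]

/-- derivative of `c * exp (k x)`. -/
lemma hasDerivAt_cexp (k c x : ℝ) :
    HasDerivAt (fun x : ℝ => c * Real.exp (k * x)) (c * k * Real.exp (k * x)) x := by
  have h1 : HasDerivAt (fun x : ℝ => k * x) k x := by
    simpa using (hasDerivAt_id x).const_mul k
  have h2 := (Real.hasDerivAt_exp (k * x)).comp x h1
  exact (h2.const_mul c).congr_deriv (by ring)

/-- Separated boundary conditions BC(α,β) on [0,1]. -/
def BC (α β : ℝ) (w : ℝ → ℝ) : Prop :=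
  w 0 * Real.cos α + deriv w 0 * Real.sin α = 0 ∧
  w 1 * Real.cos β + deriv w 1 * Real.sin β = 0

/-- Constant-density part of Theorem 3.3: the string problem with density 1 has
no negative eigenvalue λ = −σ² when cos α cos β − sin(α−β) < 0 on
(π/4, π] × [0, 3π/4). -/
theorem stmt_16 (α β : ℝ)
    (hα : α ∈ Set.Ioc (Real.pi / 4) Real.pi)
    (hβ : β ∈ Set.Ico (0:ℝ) (3 * Real.pi / 4))
    (hcond : Real.cos α * Real.cos β - Real.sin (α - β) < 0)
    (σ : ℝ) (hσ : σ ≠ 0) (u : ℝ → ℝ) (hu : ContDiff ℝ 2 u)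
    (hne : ¬ ∀ x ∈ Set.Icc (0:ℝ) 1, u x = 0)
    (hode : ∀ x ∈ Set.Icc (0:ℝ) 1, deriv (deriv u) x = σ ^ 2 * u x)
    (hbc : BC α β u) :
    False := by
  obtain ⟨hbc0, hbc1⟩ := hbc
  have hpi := Real.pi_pos
  set t : ℝ := |σ| with htdef
  have ht : 0 < t := abs_pos.mpr hσ
  have ht2 : t ^ 2 = σ ^ 2 := sq_abs σ
  -- regularity
  have hu2 : ContDiff ℝ ((1:ℕ) + 1) u := by exact_mod_cast hu
  have hud : Differentiable ℝ u := (contDiff_succ_iff_deriv.mp hu2).1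
  have hud' : Differentiable ℝ (deriv u) := by
    have h1 : ContDiff ℝ (1:ℕ) (deriv u) := by
      exact_mod_cast (contDiff_succ_iff_deriv.mp hu2).2.2
    exact h1.differentiable (by norm_num)
  -- first-order reduction : g = u' - t u  satisfies g' = -t g on [0,1]
  have hgode : ∀ x ∈ Set.Icc (0:ℝ) 1,
      HasDerivAt (fun x => deriv u x - t * u x) ((-t) * (deriv u x - t * u x) + 0) x := by
    intro x hx
    have h1 := ((hud' x).hasDerivAt).sub (((hud x).hasDerivAt).const_mul t)
    refine h1.congr_deriv ?_
    rw [hode x hx, ← ht2]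
    ring
  set g0 : ℝ := deriv u 0 - t * u 0 with hg0def
  have heq1 : Set.EqOn (fun x => deriv u x - t * u x)
      (fun x => g0 * Real.exp ((-t) * x)) (Set.Icc 0 1) := by
    apply lin_ODE_unique (-t) (fun _ => 0)
    · exact hgode
    · intro x hx
      exact (hasDerivAt_cexp (-t) g0 x).congr_deriv (by ring)
    · simp [hg0def]
  -- second reduction : u solves u' = t u + g0 exp(-t x) on [0,1]
  set A : ℝ := u 0 + g0 / (2 * t) with hAdef
  set B : ℝ := -g0 / (2 * t) with hBdef
  have huode : ∀ x ∈ Set.Icc (0:ℝ) 1,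
      HasDerivAt u (t * u x + g0 * Real.exp ((-t) * x)) x := by
    intro x hx
    have h3 := heq1 hx
    simp only at h3
    refine ((hud x).hasDerivAt).congr_deriv ?_
    rw [show deriv u x = t * u x + (deriv u x - t * u x) by ring, h3]
  have heq2 : Set.EqOn u (fun x => A * Real.exp (t * x) + B * Real.exp ((-t) * x))
      (Set.Icc 0 1) := by
    apply lin_ODE_unique t (fun x => g0 * Real.exp ((-t) * x))
    · exact huode
    · intro x hx
      have h1 := (hasDerivAt_cexp t A x).add (hasDerivAt_cexp (-t) B x)
      refine h1.congr_deriv ?_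
      rw [hBdef]
      field_simp
      ring
    · simp only [mul_zero, Real.exp_zero, mul_one, hAdef, hBdef]
      field_simp
      ring
  -- boundary values
  have hu0 : u 0 = A + B := by rw [hAdef, hBdef]; field_simp; ring
  have hdu0 : deriv u 0 = t * (A - B) := by
    have h1 : deriv u 0 = t * u 0 + g0 := by rw [hg0def]; ring
    rw [h1, hu0, hAdef, hBdef]
    field_simp
    ring
  have hu1 : u 1 = A * Real.exp t + B * Real.exp (-t) := by
    have := heq2 (Set.mem_Icc.mpr ⟨by norm_num, le_refl 1⟩)
    simpa using this
  have hdu1 : deriv u 1 = t * (A * Real.exp t - B * Real.exp (-t)) := by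
    have h1 := (huode 1 (Set.mem_Icc.mpr ⟨by norm_num, le_refl 1⟩)).deriv
    rw [h1, hu1, hBdef]
    have he : (-t) * (1:ℝ) = -t := by ring
    rw [he]
    field_simp
    ring
  -- the linear system for A, B
  rw [hu0, hdu0] at hbc0
  rw [hu1, hdu1] at hbc1
  have eq1 : A * (Real.cos α + t * Real.sin α) + B * (Real.cos α - t * Real.sin α) = 0 := by
    linear_combination hbc0
  have eq2 : A * (Real.exp t * (Real.cos β + t * Real.sin β))
      + B * (Real.exp (-t) * (Real.cos β - t * Real.sin β)) = 0 := by
    linear_combination hbc1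
  -- the determinant is positive
  have hs0 : 0 ≤ Real.sin (α - β) := sin_sub_nonneg_of_cond α β hα hβ hcond
  have hsα : 0 ≤ Real.sin α := Real.sin_nonneg_of_nonneg_of_le_pi (by linarith [hα.1]) hα.2
  have hsβ : 0 ≤ Real.sin β := Real.sin_nonneg_of_nonneg_of_le_pi hβ.1 (by linarith [hβ.2])
  have hkey := sinh_le_mul_cosh t ht.le
  have hEE : Real.exp (-t) < Real.exp t := Real.exp_lt_exp.mpr (by linarith)
  have hD : 0 < (Real.cos α + t * Real.sin α) * (Real.exp (-t) * (Real.cos β - t * Real.sin β))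
      - (Real.cos α - t * Real.sin α) * (Real.exp t * (Real.cos β + t * Real.sin β)) := by
    rw [Real.sin_sub] at hs0 hcond
    nlinarith [mul_pos (sub_pos.mpr hEE) (by linarith :
        (0:ℝ) < (Real.sin α * Real.cos β - Real.cos α * Real.sin β) - Real.cos α * Real.cos β),
      mul_nonneg hs0 (by linarith :
        (0:ℝ) ≤ t * (Real.exp t + Real.exp (-t)) - (Real.exp t - Real.exp (-t))),
      mul_nonneg (mul_nonneg (sub_pos.mpr hEE).le (mul_nonneg hsα hsβ)) (sq_nonneg t)]
  have hA0 : A = 0 := by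
    have h1 : A * ((Real.cos α + t * Real.sin α) * (Real.exp (-t) * (Real.cos β - t * Real.sin β))
        - (Real.cos α - t * Real.sin α) * (Real.exp t * (Real.cos β + t * Real.sin β))) = 0 := by
      linear_combination (Real.exp (-t) * (Real.cos β - t * Real.sin β)) * eq1
        - (Real.cos α - t * Real.sin α) * eq2
    exact (mul_eq_zero.mp h1).resolve_right (ne_of_gt hD)
  have hB0 : B = 0 := by
    have h1 : B * ((Real.cos α + t * Real.sin α) * (Real.exp (-t) * (Real.cos β - t * Real.sin β))
        - (Real.cos α - t * Real.sin α) * (Real.exp t * (Real.cos β + t * Real.sin β))) = 0 := by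
      linear_combination (Real.cos α + t * Real.sin α) * eq2
        - (Real.exp t * (Real.cos β + t * Real.sin β)) * eq1
    exact (mul_eq_zero.mp h1).resolve_right (ne_of_gt hD)
  apply hne
  intro x hx
  rw [heq2 hx]
  simp [hA0, hB0]
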